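/- Evaluation of the one-parameter integral γ arising in the heat coefficient A₁: let m ≥ 3 be an integer and μ, ν positive reals with μ ≠ ν. Then ∫_0^1 (τ²/2)·[μτ + ν(1−τ)]^{−(m+4)/2} dτ = (Γ(m/2−1)/(8·Γ(m/2+2)·(μ−ν))) · ( −m(m−2)·μ^{−m/2−1} − 4(m−2)·μ^{−m/2}/(μ−ν) − 8·(μ^{1−m/2} − ν^{1−m/2})/(μ−ν)² ). Moreover, for μ = ν the integral equals (1/6)·μ^{−m/2−2}. -/

import Mathlib

open MeasureTheory intervalIntegral

namespace NLT

set_option maxHeartbeats 2000000 in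
/-- Evaluation of the one-parameter integral `γ` arising in the heat kernel coefficient
`A₁`: for `m ≥ 3` and positive `μ ≠ ν`,
`∫₀¹ (τ²/2)[μτ+ν(1−τ)]^{−(m+4)/2} dτ = (Γ(m/2−1)/(8Γ(m/2+2)(μ−ν)))
  (−m(m−2)μ^{−m/2−1} − 4(m−2)μ^{−m/2}/(μ−ν) − 8(μ^{1−m/2}−ν^{1−m/2})/(μ−ν)²)`;
moreover for coinciding arguments the integral equals `(1/6)μ^{−m/2−2}`. -/
theorem gamma_integral (m : ℕ) (hm : 3 ≤ m) (μ ν : ℝ) (hμ : 0 < μ) (hν : 0 < ν)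
    (hμν : μ ≠ ν) :
    (∫ τ in (0 : ℝ)..1, (τ ^ 2 / 2) * (μ * τ + ν * (1 - τ)) ^ (-((m : ℝ) + 4) / 2)
      = Real.Gamma ((m : ℝ) / 2 - 1) / (8 * Real.Gamma ((m : ℝ) / 2 + 2) * (μ - ν))
        * (-(m : ℝ) * ((m : ℝ) - 2) * μ ^ (-(m : ℝ) / 2 - 1)
          - 4 * ((m : ℝ) - 2) * μ ^ (-(m : ℝ) / 2) / (μ - ν)
          - 8 * (μ ^ (1 - (m : ℝ) / 2) - ν ^ (1 - (m : ℝ) / 2)) / (μ - ν) ^ 2)) ∧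
    (∫ τ in (0 : ℝ)..1, (τ ^ 2 / 2) * (μ * τ + μ * (1 - τ)) ^ (-((m : ℝ) + 4) / 2)
      = (1 / 6) * μ ^ (-(m : ℝ) / 2 - 2)) := by
  constructor
  · have hm3 : (3:ℝ) ≤ (m:ℝ) := by exact_mod_cast hm
    set p : ℝ := -((m:ℝ)+4)/2 with hp
    set a : ℝ := μ - ν with ha_def
    have ha : a ≠ 0 := sub_ne_zero.2 hμν
    have upos : ∀ τ ∈ Set.uIcc (0:ℝ) 1, 0 < ν + a * τ := by
      intro τ hτ
      rw [Set.uIcc_of_le zero_le_one] at hτ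
      obtain ⟨h0, h1'⟩ := hτ
      rw [ha_def]
      rcases h0.eq_or_lt with h | h
      · rw [← h]; simpa using hν
      · nlinarith [mul_pos hμ h, mul_nonneg hν.le (sub_nonneg.2 h1')]
    have h1 : p + 1 ≠ 0 := by rw [hp]; intro h; nlinarith
    have h2 : p + 2 ≠ 0 := by rw [hp]; intro h; nlinarith
    have h3 : p + 3 ≠ 0 := by rw [hp]; intro h; nlinarith
    set F : ℝ → ℝ := fun τ =>
      1/(2*a^2) * ((ν+a*τ)^(p+3)/((p+3)*a) - 2*ν*(ν+a*τ)^(p+2)/((p+2)*a)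
        + ν^2*(ν+a*τ)^(p+1)/((p+1)*a)) with hF_def
    have hF : ∀ τ ∈ Set.uIcc (0:ℝ) 1,
        HasDerivAt F ((τ^2/2) * (ν+a*τ)^p) τ := by
      intro τ hτ
      have hu : 0 < ν + a * τ := upos τ hτ
      have hlin : HasDerivAt (fun t : ℝ => ν + a*t) a τ := by
        simpa using ((hasDerivAt_id τ).const_mul a).const_add ν
      have hq : ∀ q : ℝ, HasDerivAt (fun t : ℝ => (ν+a*t)^q)
          (q * (ν+a*τ)^(q-1) * a) τ := by
        intro q
        have := (Real.hasDerivAt_rpow_const (p := q) (x := ν + a*τ)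
          (Or.inl hu.ne')).comp τ hlin
        exact this
      have hA := (hq (p+3)).div_const ((p+3)*a)
      have hB := ((hq (p+2)).const_mul (2*ν)).div_const ((p+2)*a)
      have hC := ((hq (p+1)).const_mul (ν^2)).div_const ((p+1)*a)
      have hFd := ((hA.sub hB).add hC).const_mul (1/(2*a^2))
      convert hFd using 1
      case e'_4 => rfl
      case e'_5 => rfl
      case e'_8 => rfl
      have eu1 : (ν+a*τ)^(p+1) = (ν+a*τ)^p * (ν+a*τ) := Real.rpow_add_one hu.ne' p
      have eu2 : (ν+a*τ)^(p+2-1) = (ν+a*τ)^p * (ν+a*τ) := by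
        rw [show p+2-1 = p+1 by ring, eu1]
      have eu3 : (ν+a*τ)^(p+3-1) = (ν+a*τ)^p * (ν+a*τ) * (ν+a*τ) := by
        rw [show p+3-1 = (p+1)+1 by ring, Real.rpow_add_one hu.ne', eu1]
      rw [show p+1-1 = p by ring, eu2, eu3]
      field_simp
      ring
    have hInt : IntervalIntegrable (fun τ => (τ^2/2) * (ν+a*τ)^p)
        volume 0 1 := by
      apply ContinuousOn.intervalIntegrable
      apply ContinuousOn.mul (by fun_prop)
      exact ContinuousOn.rpow_const
        (by fun_prop) (fun τ hτ => Or.inl (upos τ hτ).ne')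
    have key : (∫ τ in (0:ℝ)..1, (τ^2/2) * (ν+a*τ)^p) = F 1 - F 0 :=
      integral_eq_sub_of_hasDerivAt hF hInt
    have hcongr : (∫ τ in (0:ℝ)..1, (τ^2/2) * (μ*τ+ν*(1-τ))^p)
        = ∫ τ in (0:ℝ)..1, (τ^2/2) * (ν+a*τ)^p := by
      apply integral_congr
      intro τ _
      show τ ^ 2 / 2 * (μ * τ + ν * (1 - τ)) ^ p = τ ^ 2 / 2 * (ν + a * τ) ^ p
      rw [show μ*τ+ν*(1-τ) = ν+a*τ by rw [ha_def]; ring]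
    rw [hcongr, key, hF_def]
    simp only [mul_one, mul_zero, add_zero]
    have hμa : ν + a = μ := by rw [ha_def]; ring
    rw [hμa]
    have gamma3 : ∀ x : ℝ, x ≠ 0 → x+1 ≠ 0 → x+2 ≠ 0 →
        Real.Gamma (x+3) = (x+2)*(x+1)*x*Real.Gamma x := by
      intro x hx hx1 hx2
      rw [show x+3 = (x+2)+1 by ring, Real.Gamma_add_one hx2,
          show x+2 = (x+1)+1 by ring, Real.Gamma_add_one hx1,
          Real.Gamma_add_one hx]
      ring
    have hx0 : (m:ℝ)/2-1 ≠ 0 := by intro h; nlinarith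
    have hG := gamma3 ((m:ℝ)/2-1) hx0 (by intro h; nlinarith) (by intro h; nlinarith)
    rw [show (m:ℝ)/2-1+3 = (m:ℝ)/2+2 by ring,
        show (m:ℝ)/2-1+2 = (m:ℝ)/2+1 by ring,
        show (m:ℝ)/2-1+1 = (m:ℝ)/2 by ring] at hG
    have hg : Real.Gamma ((m:ℝ)/2-1) ≠ 0 := (Real.Gamma_pos_of_pos (by nlinarith)).ne'
    rw [show -(m:ℝ)/2-1 = p+1 by rw [hp]; ring,
        show -(m:ℝ)/2 = p+2 by rw [hp]; ring,
        show (1:ℝ)-(m:ℝ)/2 = p+3 by rw [hp]; ring]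
    have hPμ2 : μ^(p+2) = μ^(p+1) * μ := by
      rw [show p+2 = (p+1)+1 by ring, Real.rpow_add_one hμ.ne']
    have hPμ3 : μ^(p+3) = μ^(p+1) * μ * μ := by
      rw [show p+3 = ((p+1)+1)+1 by ring, Real.rpow_add_one hμ.ne',
          Real.rpow_add_one hμ.ne']
    have hPν2 : ν^(p+2) = ν^(p+1) * ν := by
      rw [show p+2 = (p+1)+1 by ring, Real.rpow_add_one hν.ne']
    have hPν3 : ν^(p+3) = ν^(p+1) * ν * ν := by
      rw [show p+3 = ((p+1)+1)+1 by ring, Real.rpow_add_one hν.ne',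
          Real.rpow_add_one hν.ne']
    rw [hPμ2, hPμ3, hPν2, hPν3, hG]
    set P := μ^(p+1) with hP
    set Q := ν^(p+1) with hQ
    set g := Real.Gamma ((m:ℝ)/2-1) with hgdef
    have hmne : (m:ℝ) ≠ 0 := by positivity
    have hm2 : (m:ℝ) - 2 ≠ 0 := by intro h; nlinarith
    have hm2' : (m:ℝ) + 2 ≠ 0 := by positivity
    rw [hp] at h1 h2 h3 ⊢
    rw [ha_def] at ha ⊢
    rw [show (-((m:ℝ)+4)/2+3)*(μ-ν) = (((m:ℝ)-2)*(μ-ν))/(-2) by ring,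
        show (-((m:ℝ)+4)/2+2)*(μ-ν) = ((m:ℝ)*(μ-ν))/(-2) by ring,
        show (-((m:ℝ)+4)/2+1)*(μ-ν) = (((m:ℝ)+2)*(μ-ν))/(-2) by ring]
    rw [div_div_eq_mul_div, div_div_eq_mul_div, div_div_eq_mul_div]
    field_simp [hm2, hmne, hm2', ha, hg]
    ring
  · have hval : (∫ τ in (0:ℝ)..1, (τ^2/2) * (μ*τ+μ*(1-τ))^(-((m:ℝ)+4)/2))
        = ∫ τ in (0:ℝ)..1, μ^(-((m:ℝ)+4)/2)/2 * τ^2 := by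
      apply integral_congr
      intro τ _
      show τ ^ 2 / 2 * (μ * τ + μ * (1 - τ)) ^ (-((m:ℝ)+4)/2) = _
      rw [show μ*τ+μ*(1-τ) = μ by ring]
      ring
    rw [hval, intervalIntegral.integral_const_mul, integral_pow]
    rw [show -((m:ℝ)+4)/2 = -(m:ℝ)/2-2 by ring]
    norm_num
    ring

end NLT
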